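/- Any linear subspace S of the space of n×n complex matrices that contains only singular matrices has dimension at most n² - n. -/

import Mathlib

open LinearMap Submodule Module Function Polynomial
set_option synthInstance.maxHeartbeats 400000
set_option maxHeartbeats 1000000


private lemma bij_badset_finite {V₁ : Type*} [AddCommGroup V₁] [Module ℂ V₁]
    [FiniteDimensional ℂ V₁] (σ τ : V₁ →ₗ[ℂ] V₁) (hσ : Function.Bijective σ) :
    {t : ℂ | ¬ Function.Bijective (σ + t • τ)}.Finite := by
  classical
  set b := Module.finBasis ℂ V₁
  set M := LinearMap.toMatrix b b σ with hM
  set N := LinearMap.toMatrix b b τ with hN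
  set p : Polynomial ℂ := (M.map Polynomial.C + (Polynomial.X : ℂ[X]) • N.map Polynomial.C).det
    with hp
  have hev : ∀ t : ℂ, p.eval t = LinearMap.det (σ + t • τ) := by
    intro t
    have h0 : LinearMap.toMatrix b b (σ + t • τ) = M + t • N := by
      rw [map_add, map_smul]
    have h1 : (M.map C + (Polynomial.X : ℂ[X]) • N.map C).map (evalRingHom t)
        = LinearMap.toMatrix b b (σ + t • τ) := by
      rw [h0]
      ext i j
      simp only [Matrix.map_apply, Matrix.add_apply, Matrix.smul_apply, coe_evalRingHom,
        eval_add, eval_C, smul_eq_mul, eval_mul, eval_X]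
    have h2 := RingHom.map_det (evalRingHom t) (M.map C + (Polynomial.X : ℂ[X]) • N.map C)
    rw [hp, ← LinearMap.det_toMatrix b (σ + t • τ), ← h1]
    exact h2
  have hp0 : p.eval 0 ≠ 0 := by
    rw [hev 0]
    have := (LinearEquiv.ofBijective σ hσ).isUnit_det'
    simpa using (show LinearMap.det σ ≠ 0 from this.ne_zero)
  have hpne : p ≠ 0 := fun h => hp0 (by simp [h])
  refine (Polynomial.finite_setOf_isRoot hpne).subset ?_
  intro t ht
  by_contra hroot
  apply ht
  have hdet : LinearMap.det (σ + t • τ) ≠ 0 := by rw [← hev t]; exact hroot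
  have h := (LinearMap.equivOfDetNeZero (σ + t • τ) hdet).bijective
  rwa [show ⇑(LinearMap.equivOfDetNeZero (σ + t • τ) hdet) = ⇑(σ + t • τ) from rfl] at h

private lemma inj_badset_finite {V₁ V₂ : Type*} [AddCommGroup V₁] [Module ℂ V₁]
    [FiniteDimensional ℂ V₁] [AddCommGroup V₂] [Module ℂ V₂] [FiniteDimensional ℂ V₂]
    (Λ₀ Λ₁ : V₁ →ₗ[ℂ] V₂) (h : Function.Injective Λ₀) :
    {t : ℂ | ¬ Function.Injective (Λ₀ + t • Λ₁)}.Finite := by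
  obtain ⟨L, hL⟩ := Λ₀.exists_leftInverse_of_injective (LinearMap.ker_eq_bot.mpr h)
  have hbij : Function.Bijective (L ∘ₗ Λ₀) := by rw [hL]; exact Function.bijective_id
  refine (bij_badset_finite (L ∘ₗ Λ₀) (L ∘ₗ Λ₁) hbij).subset ?_
  intro t ht
  simp only [Set.mem_setOf_eq] at ht ⊢
  intro hb
  apply ht
  have he : (L ∘ₗ Λ₀ + t • (L ∘ₗ Λ₁)) = L ∘ₗ (Λ₀ + t • Λ₁) := by ext x; simp
  rw [he] at hb
  have hinj : Function.Injective (⇑L ∘ ⇑(Λ₀ + t • Λ₁)) := by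
    rw [← LinearMap.coe_comp]; exact hb.injective
  exact hinj.of_comp

private theorem endo_bound {V : Type*} [AddCommGroup V] [Module ℂ V] [FiniteDimensional ℂ V]
    (T : Submodule ℂ (V →ₗ[ℂ] V)) (hT : ∀ f ∈ T, ¬ Function.Surjective f) :
    Module.finrank ℂ T ≤ Module.finrank ℂ V ^ 2 - Module.finrank ℂ V := by
  classical
  set n := Module.finrank ℂ V with hn
  -- choose an element of maximal rank
  set R : Set ℕ := {k | ∃ f ∈ T, Module.finrank ℂ (LinearMap.range f) = k} with hR
  have hRne : R.Nonempty := ⟨_, 0, T.zero_mem, rfl⟩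
  have hRbdd : BddAbove R := ⟨n, by rintro k ⟨f, hf, rfl⟩; exact Submodule.finrank_le _⟩
  obtain ⟨f₀, hf₀T, hf₀r⟩ := Nat.sSup_mem hRne hRbdd
  set r := sSup R with hrdef
  have hmax : ∀ f ∈ T, Module.finrank ℂ (LinearMap.range f) ≤ r := fun f hf =>
    le_csSup hRbdd ⟨f, hf, rfl⟩
  have hrn : r < n := by
    rw [← hf₀r]
    exact Submodule.finrank_lt (lt_of_le_of_ne le_top
      (fun h => hT f₀ hf₀T (LinearMap.range_eq_top.mp h))).ne
  -- subspaces and projections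
  set K := LinearMap.ker f₀ with hK
  set W := LinearMap.range f₀ with hW
  obtain ⟨Kc, hKc⟩ := Submodule.exists_isCompl K
  obtain ⟨Wc, hWc⟩ := Submodule.exists_isCompl W
  set pW := W.linearProjOfIsCompl Wc hWc with hpW
  set pWc := Wc.linearProjOfIsCompl W hWc.symm with hpWc
  set pK := K.linearProjOfIsCompl Kc hKc with hpK
  set pKc := Kc.linearProjOfIsCompl K hKc.symm with hpKc
  have hsplitW : ∀ v : V, ((pW v : V) + (pWc v : V)) = v :=
    Submodule.projection_add_projection_eq_self hWc
  have hsplitK : ∀ v : V, ((pK v : V) + (pKc v : V)) = v :=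
    Submodule.projection_add_projection_eq_self hKc
  have hpW_mem : ∀ y : V, y ∈ W → ((pW y : V)) = y := by
    intro y hy
    exact congrArg _ (Submodule.linearProjOfIsCompl_apply_left hWc ⟨y, hy⟩)
  have hpW_memc : ∀ y : V, y ∈ Wc → pW y = 0 :=
    fun y hy => Submodule.linearProjOfIsCompl_apply_right' hWc hy
  have hpWc_mem : ∀ y : V, y ∈ W → pWc y = 0 :=
    fun y hy => Submodule.linearProjOfIsCompl_apply_right' hWc.symm hy
  -- block maps
  set A : (V →ₗ[ℂ] V) → (↥Kc →ₗ[ℂ] ↥W) := fun f => pW ∘ₗ (f ∘ₗ Kc.subtype) with hA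
  set Cm : (V →ₗ[ℂ] V) → (↥Kc →ₗ[ℂ] ↥Wc) := fun f => pWc ∘ₗ (f ∘ₗ Kc.subtype) with hCm
  set B : (V →ₗ[ℂ] V) → (↥K →ₗ[ℂ] ↥W) := fun f => pW ∘ₗ (f ∘ₗ K.subtype) with hB
  set θ := A f₀ with hθdef
  -- dimension bookkeeping
  have hrange_ker : r + Module.finrank ℂ K = n := by
    have := LinearMap.finrank_range_add_finrank_ker f₀
    rw [hf₀r] at this; exact this
  have hKcr : Module.finrank ℂ Kc = r := by
    have h1 := Submodule.finrank_add_eq_of_isCompl hKc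
    omega
  have hWr : Module.finrank ℂ W = r := hf₀r
  have hWcr : Module.finrank ℂ Wc = n - r := by
    have h1 := Submodule.finrank_add_eq_of_isCompl hWc
    rw [hWr] at h1; omega
  have hKr : Module.finrank ℂ K = n - r := by omega
  -- basic coercion facts
  have hθcoe : ∀ x : ↥Kc, ((θ x : V)) = f₀ x := by
    intro x
    show ((pW (f₀ x) : V)) = f₀ x
    exact hpW_mem _ ⟨x, rfl⟩
  have hθbij : Function.Bijective θ := by
    constructor
    · intro x y hxy
      have : f₀ (x : V) = f₀ (y : V) := by rw [← hθcoe, ← hθcoe, hxy]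
      have hxyK : ((x : V) - y) ∈ K := by
        simp only [hK, LinearMap.mem_ker, map_sub, this, sub_self]
      have hxyKc : ((x : V) - y) ∈ Kc := sub_mem x.2 y.2
      have : ((x : V) - y) = 0 := by
        have := hKc.inf_eq_bot
        have hm : ((x : V) - y) ∈ K ⊓ Kc := ⟨hxyK, hxyKc⟩
        rw [this] at hm
        simpa using hm
      exact Subtype.ext (by linear_combination (norm := abel) this)
    · rintro ⟨w, v, rfl⟩
      obtain ⟨u, k, huv, -⟩ := Submodule.existsUnique_add_of_isCompl hKc.symm v
      refine ⟨u, Subtype.ext ?_⟩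
      rw [hθcoe]
      show f₀ (u : V) = f₀ v
      rw [← huv]
      simp only [map_add]
      have : f₀ (k : V) = 0 := k.2
      rw [this, add_zero]
  -- F1 : any element of T maps K into W
  have hD : ∀ f ∈ T, ∀ v : V, v ∈ K → f v ∈ W := by
    intro f hf v hv
    by_contra hfv
    set e0 := LinearEquiv.ofBijective θ hθbij with he0
    set ι : ↥W →ₗ[ℂ] V := Kc.subtype ∘ₗ (e0.symm : ↥W →ₗ[ℂ] ↥Kc) with hιdef
    have hι0 : ∀ w : ↥W, f₀ (ι w) = (w : V) := by
      intro w
      have h1 : θ (e0.symm w) = w := by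
        have h2 := e0.apply_symm_apply w
        rw [he0] at h2
        rwa [LinearEquiv.ofBijective_apply] at h2
      calc f₀ (ι w) = ((θ (e0.symm w) : V)) := (hθcoe _).symm
      _ = (w : V) := by rw [h1]
    set Λ₀ : (↥W × ℂ) →ₗ[ℂ] V :=
      W.subtype ∘ₗ (LinearMap.fst ℂ ↥W ℂ) + (LinearMap.snd ℂ ↥W ℂ).smulRight (f v) with hΛ₀
    set Λ₁ : (↥W × ℂ) →ₗ[ℂ] V := (f ∘ₗ ι) ∘ₗ (LinearMap.fst ℂ ↥W ℂ) with hΛ₁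
    have hΛ₀app : ∀ w : ↥W, ∀ c : ℂ, Λ₀ (w, c) = (w : V) + c • f v := by
      intro w c; simp [hΛ₀]
    have hΛ₁app : ∀ w : ↥W, ∀ c : ℂ, Λ₁ (w, c) = f (ι w) := by
      intro w c; simp [hΛ₁]
    have hΛ₀inj : Function.Injective ⇑Λ₀ := by
      rw [← LinearMap.ker_eq_bot, eq_bot_iff]
      rintro ⟨w, c⟩ hwc
      have hwc' : (w : V) + c • f v = 0 := by
        have := hwc
        rw [LinearMap.mem_ker, hΛ₀app] at this
        exact this
      rcases eq_or_ne c 0 with hc | hc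
      · subst hc
        rw [zero_smul, add_zero] at hwc'
        have : w = 0 := Subtype.ext hwc'
        simp [this]
      · exfalso
        apply hfv
        have h2 : c • f v = -(w : V) := by
          linear_combination (norm := module) hwc'
        have hfveq : f v = c⁻¹ • (-(w : V)) := by
          rw [← h2, smul_smul, inv_mul_cancel₀ hc, one_smul]
        rw [hfveq]
        exact W.smul_mem _ (W.neg_mem w.2)
    obtain ⟨t, ht⟩ : ∃ t : ℂ, t ∈ ({t : ℂ | ¬ Function.Injective ⇑(Λ₀ + t • Λ₁)} ∪ {0})ᶜ :=
      ((inj_badset_finite Λ₀ Λ₁ hΛ₀inj).union (Set.finite_singleton 0)).infinite_compl.nonempty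
    rw [Set.mem_compl_iff, Set.mem_union, not_or] at ht
    have htne : t ≠ 0 := fun h => ht.2 (by simp [h])
    have htinj : Function.Injective ⇑(Λ₀ + t • Λ₁) := by
      have := ht.1
      rw [Set.mem_setOf_eq, not_not] at this
      exact this
    set g := f₀ + t • f with hgdef
    have hgT : g ∈ T := T.add_mem hf₀T (T.smul_mem t hf)
    have hrange : LinearMap.range (Λ₀ + t • Λ₁) ≤ LinearMap.range g := by
      rintro y ⟨⟨w, c⟩, rfl⟩
      refine ⟨ι w + (c * t⁻¹) • v, ?_⟩
      have hf₀v : f₀ v = 0 := hv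
      have hts : c * t⁻¹ * t = c := by field_simp
      simp only [hgdef, LinearMap.add_apply, LinearMap.smul_apply, map_add, map_smul,
        hι0, hf₀v, smul_zero, add_zero, hΛ₀app, hΛ₁app]
      rw [zero_add, smul_smul, hts]
      abel
    have hfr1 : Module.finrank ℂ (LinearMap.range (Λ₀ + t • Λ₁)) = r + 1 := by
      rw [LinearMap.finrank_range_of_inj htinj]
      simp [Module.finrank_prod, hWr]
    have hle1 := Submodule.finrank_mono hrange
    have hle2 := hmax g hgT
    omega
  -- coercion decompositions
  have hfKc : ∀ (f : V →ₗ[ℂ] V) (x : ↥Kc), f (x : V) = ((A f x : V)) + ((Cm f x : V)) := by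
    intro f x
    rw [← hsplitW (f (x : V))]
    rfl
  have hfK : ∀ f ∈ T, ∀ y : ↥K, f (y : V) = ((B f y : V)) := by
    intro f hf y
    have h1 : f (y : V) ∈ W := hD f hf _ y.2
    have := hpW_mem _ h1
    show f (y:V) = ((pW (f (y : V)) : V))
    rw [this]
  -- F2 : key vanishing statement
  have hWuniq : ∀ (a a' : ↥W) (c c' : ↥Wc), (a : V) + (c : V) = (a' : V) + (c' : V) →
      a = a' ∧ c = c' := by
    intro a a' c c' h
    have hm : ((a - a' : ↥W) : V) ∈ Wc := by
      have h2 : ((a - a' : ↥W) : V) = ((c' - c : ↥Wc) : V) := by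
        push_cast
        linear_combination (norm := abel) h
      rw [h2]; exact (c' - c).2
    have hz : ((a - a' : ↥W) : V) = 0 :=
      Submodule.disjoint_def.mp hWc.disjoint _ (a - a').2 hm
    have ha : a = a' := by
      have h3 : a - a' = 0 := Subtype.ext (by simpa using hz)
      exact sub_eq_zero.mp h3
    refine ⟨ha, ?_⟩
    apply Subtype.ext
    apply add_left_cancel (a := (a' : V))
    rw [← ha] at h ⊢
    exact h
  have hF2 : ∀ f ∈ T, ∀ t : ℂ, t ≠ 0 → Function.Injective ⇑(θ + t • A f) →
      ∀ (x : ↥Kc) (y : ↥K), (θ + t • A f) x = B f y → Cm f x = 0 := by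
    intro f hf t htne hΘinj x y hxy
    set g := f₀ + t • f with hgdef
    have hgT : g ∈ T := T.add_mem hf₀T (T.smul_mem t hf)
    have hgx : ∀ z : ↥Kc, g (z : V) = (((θ + t • A f) z : V)) + ((t • Cm f z : ↥Wc) : V) := by
      intro z
      have h1 : f (z : V) = ((A f z : V)) + ((Cm f z : V)) := hfKc f z
      have h2 : f₀ (z : V) = ((θ z : V)) := (hθcoe z).symm
      simp only [hgdef, LinearMap.add_apply, LinearMap.smul_apply, h1, h2,
        Submodule.coe_add, SetLike.val_smul, smul_add]
      abel
    have hgy : ∀ z : ↥K, g (z : V) = ((t • B f z : ↥W) : V) := by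
      intro z
      have h1 : f (z : V) = ((B f z : V)) := hfK f hf z
      have h2 : f₀ (z : V) = 0 := z.2
      simp only [hgdef, LinearMap.add_apply, LinearMap.smul_apply, h1, h2, zero_add,
        SetLike.val_smul]
    have hginj : Function.Injective ⇑(g ∘ₗ Kc.subtype) := by
      rw [← LinearMap.ker_eq_bot, eq_bot_iff]
      intro z hz
      simp only [SetLike.mem_coe, LinearMap.mem_ker, LinearMap.comp_apply,
        Submodule.coe_subtype] at hz
      have h3 : (((θ + t • A f) z : V)) + ((t • Cm f z : ↥Wc) : V)
          = ((0 : ↥W) : V) + ((0 : ↥Wc) : V) := by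
        rw [← hgx z]
        simpa using hz
      obtain ⟨h4, -⟩ := hWuniq _ _ _ _ h3
      have h5 : z = 0 := by
        apply hΘinj
        rw [h4, map_zero]
      simp [h5]
    have hr1 : Module.finrank ℂ (LinearMap.range (g ∘ₗ Kc.subtype)) = r := by
      rw [LinearMap.finrank_range_of_inj hginj, hKcr]
    have hle : LinearMap.range (g ∘ₗ Kc.subtype) ≤ LinearMap.range g :=
      LinearMap.range_comp_le_range _ _
    have heq : LinearMap.range (g ∘ₗ Kc.subtype) = LinearMap.range g :=
      Submodule.eq_of_le_of_finrank_le hle (by rw [hr1]; exact hmax g hgT)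
    have hmem : g (y : V) ∈ LinearMap.range (g ∘ₗ Kc.subtype) := by
      rw [heq]; exact ⟨(y : V), rfl⟩
    obtain ⟨x', hx'⟩ := hmem
    have hx'' : (((θ + t • A f) x' : V)) + ((t • Cm f x' : ↥Wc) : V)
        = ((t • B f y : ↥W) : V) + ((0 : ↥Wc) : V) := by
      rw [← hgx x', ← hgy y]
      simpa using hx'
    obtain ⟨hW1, hW2⟩ := hWuniq _ _ _ _ hx''
    have hx'eq : x' = t • x := by
      apply hΘinj
      rw [map_smul, hxy, hW1]
    have h7 : Cm f x' = 0 := (smul_eq_zero.mp hW2).resolve_left htne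
    rw [hx'eq, map_smul] at h7
    exact (smul_eq_zero.mp h7).resolve_left htne
  -- the resolvent subspace U
  set US : Set (Submodule ℂ ↥Kc) := {p | ∃ f ∈ T, ∃ t : ℂ, t ≠ 0 ∧
    ∃ _ : Function.Injective ⇑(θ + t • A f),
      p = Submodule.comap (θ + t • A f) (LinearMap.range (B f))} with hUS
  set U := sSup US with hUdef
  set u := Module.finrank ℂ U with hu
  have huKc : u ≤ r := by rw [← hKcr]; exact Submodule.finrank_le U
  -- additivity of the blocks
  have hAadd : ∀ f g : V →ₗ[ℂ] V, A (f + g) = A f + A g := by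
    intro f g; ext x; simp [hA]
  have hBadd : ∀ f g : V →ₗ[ℂ] V, B (f + g) = B f + B g := by
    intro f g; ext x; simp [hB]
  have hCadd : ∀ f g : V →ₗ[ℂ] V, Cm (f + g) = Cm f + Cm g := by
    intro f g; ext x; simp [hCm]
  have hCsmul : ∀ (c : ℂ) (f : V →ₗ[ℂ] V), Cm (c • f) = c • Cm f := by
    intro c f; ext x; simp [hCm]
  -- (ii) : C f kills U for f in the AB-kernel
  have hCU : ∀ f ∈ T, A f = 0 → B f = 0 → ∀ x ∈ U, Cm f x = 0 := by
    intro f hf hAf hBf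
    have hle : U ≤ LinearMap.ker (Cm f) := by
      rw [hUdef]
      apply sSup_le
      rintro p ⟨f', hf', t, htne, hinj, rfl⟩
      intro x hx
      rw [Submodule.mem_comap] at hx
      obtain ⟨y, hy⟩ := hx
      rw [LinearMap.mem_ker]
      have hA' : A (f + f') = A f' := by rw [hAadd, hAf, zero_add]
      have hB' : B (f + f') = B f' := by rw [hBadd, hBf, zero_add]
      have hinj2 : Function.Injective ⇑(θ + t • A (f + f')) := by rw [hA']; exact hinj
      have heq2 : (θ + t • A (f + f')) x = B (f + f') y := by
        rw [hA', hB']; exact hy.symm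
      have h1 := hF2 (f + f') (T.add_mem hf hf') t htne hinj2 x y heq2
      have h2 := hF2 f' hf' t htne hinj x y hy.symm
      rw [hCadd] at h1
      simpa [LinearMap.add_apply, h2] using h1
    intro x hx
    exact hle hx
  -- (i') : for f ∈ T with A f = 0, range of B f is inside U mapped by θ
  have hBU : ∀ f ∈ T, A f = 0 → ∀ y : ↥K, B f y ∈ U.map θ := by
    intro f hf hAf y
    have hinj : Function.Injective ⇑(θ + (1 : ℂ) • A f) := by
      rw [hAf, smul_zero, add_zero]; exact hθbij.injective
    set e0 := LinearEquiv.ofBijective θ hθbij with he0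
    set x : ↥Kc := e0.symm (B f y) with hxdef
    have hθx : θ x = B f y := by
      have h2 := e0.apply_symm_apply (B f y)
      rw [he0, LinearEquiv.ofBijective_apply] at h2
      exact h2
    have hxU : x ∈ U := by
      have hpU : Submodule.comap (θ + (1 : ℂ) • A f) (LinearMap.range (B f)) ∈ US :=
        ⟨f, hf, 1, one_ne_zero, hinj, rfl⟩
      apply le_sSup hpU
      rw [Submodule.mem_comap]
      refine ⟨y, ?_⟩
      rw [hAf, smul_zero, add_zero, hθx]
    exact ⟨x, hxU, hθx⟩
  -- further linearity
  have hAsmul : ∀ (c : ℂ) (f : V →ₗ[ℂ] V), A (c • f) = c • A f := by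
    intro c f; ext x; simp [hA]
  have hBsmul : ∀ (c : ℂ) (f : V →ₗ[ℂ] V), B (c • f) = c • B f := by
    intro c f; ext x; simp [hB]
  -- the projection onto the A block
  set PA : ↥T →ₗ[ℂ] (↥Kc →ₗ[ℂ] ↥W) :=
    { toFun := fun f => A (f : V →ₗ[ℂ] V)
      map_add' := by
        intro f g
        show A ((f + g : ↥T) : V →ₗ[ℂ] V) = A (f : V →ₗ[ℂ] V) + A (g : V →ₗ[ℂ] V)
        rw [Submodule.coe_add, hAadd]
      map_smul' := by
        intro c f
        show A ((c • f : ↥T) : V →ₗ[ℂ] V) = c • A (f : V →ₗ[ℂ] V)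
        rw [Submodule.coe_smul, hAsmul] } with hPA
  have hrank := LinearMap.finrank_range_add_finrank_ker (K := ℂ) (V := ↥T)
    (V₂ := ↥Kc →ₗ[ℂ] ↥W) PA
  have hr2a : Module.finrank ℂ (LinearMap.range PA) ≤ r * r := by
    have h1 := Submodule.finrank_le (LinearMap.range PA)
    rwa [Module.finrank_linearMap, hKcr, hWr] at h1
  -- complements of U in Kc and of U2 in W
  obtain ⟨Uc, hUc⟩ := Submodule.exists_isCompl U
  have hUcr : Module.finrank ℂ Uc = r - u := by
    have h1 := Submodule.finrank_add_eq_of_isCompl hUc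
    rw [hKcr] at h1
    omega
  set U2 := U.map θ with hU2
  have hU2r : Module.finrank ℂ U2 = u := by
    set e0 := LinearEquiv.ofBijective θ hθbij with he0
    have hcoe : (e0 : ↥Kc →ₗ[ℂ] ↥W) = θ := by
      ext z
      exact congrArg Subtype.val (LinearEquiv.ofBijective_apply θ z)
    have h1 := LinearEquiv.finrank_map_eq e0 U
    rw [hcoe] at h1
    exact h1
  obtain ⟨W2c, hW2c⟩ := Submodule.exists_isCompl U2
  set pU2W := U2.linearProjOfIsCompl W2c hW2c with hpU2W
  have hpU2W_mem : ∀ w : ↥W, w ∈ U2 → ((pU2W w : ↥W)) = w := by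
    intro w hw
    exact congrArg _ (Submodule.linearProjOfIsCompl_apply_left hW2c ⟨w, hw⟩)
  -- projections for U inside Kc
  set pU2 := U.linearProjOfIsCompl Uc hUc with hpU2
  set pUc2 := Uc.linearProjOfIsCompl U hUc.symm with hpUc2
  have hsplitU : ∀ z : ↥Kc, ((pU2 z : ↥Kc)) + ((pUc2 z : ↥Kc)) = z :=
    Submodule.projection_add_projection_eq_self hUc
  -- the injection from the kernel of PA
  have hJadd : ∀ f g : ↥(LinearMap.ker PA),
      ((pU2W ∘ₗ B ((f + g : ↥(LinearMap.ker PA)) : V →ₗ[ℂ] V),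
        Cm ((f + g : ↥(LinearMap.ker PA)) : V →ₗ[ℂ] V) ∘ₗ Uc.subtype)
        : (↥K →ₗ[ℂ] ↥U2) × (↥Uc →ₗ[ℂ] ↥Wc))
      = (pU2W ∘ₗ B (f : V →ₗ[ℂ] V), Cm (f : V →ₗ[ℂ] V) ∘ₗ Uc.subtype)
        + (pU2W ∘ₗ B (g : V →ₗ[ℂ] V), Cm (g : V →ₗ[ℂ] V) ∘ₗ Uc.subtype) := by
    intro f g
    have h1 : ((f + g : ↥(LinearMap.ker PA)) : V →ₗ[ℂ] V)
        = (f : V →ₗ[ℂ] V) + (g : V →ₗ[ℂ] V) := rfl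
    rw [h1, hCadd, hBadd, LinearMap.add_comp, LinearMap.comp_add]
    rfl
  have hJsmul : ∀ (c : ℂ) (f : ↥(LinearMap.ker PA)),
      ((pU2W ∘ₗ B ((c • f : ↥(LinearMap.ker PA)) : V →ₗ[ℂ] V),
        Cm ((c • f : ↥(LinearMap.ker PA)) : V →ₗ[ℂ] V) ∘ₗ Uc.subtype)
        : (↥K →ₗ[ℂ] ↥U2) × (↥Uc →ₗ[ℂ] ↥Wc))
      = c • (pU2W ∘ₗ B (f : V →ₗ[ℂ] V), Cm (f : V →ₗ[ℂ] V) ∘ₗ Uc.subtype) := by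
    intro c f
    have h1 : ((c • f : ↥(LinearMap.ker PA)) : V →ₗ[ℂ] V) = c • (f : V →ₗ[ℂ] V) := rfl
    rw [h1, hCsmul, hBsmul, LinearMap.smul_comp, LinearMap.comp_smul]
    rfl
  set J : ↥(LinearMap.ker PA) →ₗ[ℂ] ((↥K →ₗ[ℂ] ↥U2) × (↥Uc →ₗ[ℂ] ↥Wc)) :=
    { toFun := fun f => (pU2W ∘ₗ B (f : V →ₗ[ℂ] V), Cm (f : V →ₗ[ℂ] V) ∘ₗ Uc.subtype)
      map_add' := hJadd
      map_smul' := fun c f => hJsmul c f } with hJ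
  have hJker : LinearMap.ker J = ⊥ := by
    rw [eq_bot_iff]
    intro f hfk
    rw [LinearMap.mem_ker] at hfk
    have hfT : (f : V →ₗ[ℂ] V) ∈ T := (f : ↥T).2
    have hA0 : A (f : V →ₗ[ℂ] V) = 0 := f.2
    have hJ1 : pU2W ∘ₗ B (f : V →ₗ[ℂ] V) = 0 := congrArg Prod.fst hfk
    have hJ2 : Cm (f : V →ₗ[ℂ] V) ∘ₗ Uc.subtype = 0 := congrArg Prod.snd hfk
    -- first conclude B f = 0
    have hB0 : B (f : V →ₗ[ℂ] V) = 0 := by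
      ext y
      have h1 : B (f : V →ₗ[ℂ] V) y ∈ U2 := hBU _ hfT hA0 y
      have h2 : pU2W (B (f : V →ₗ[ℂ] V) y) = 0 := by
        have h3 := LinearMap.ext_iff.mp hJ1 y
        simpa using h3
      have h4 := hpU2W_mem _ h1
      rw [h2] at h4
      simpa using h4.symm
    -- then Cm f = 0
    have hCmf : Cm (f : V →ₗ[ℂ] V) = 0 := by
      ext z
      rw [← hsplitU z, map_add]
      have h1 : Cm (f : V →ₗ[ℂ] V) ((pU2 z : ↥Kc)) = 0 :=
        hCU _ hfT hA0 hB0 _ (pU2 z).2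
      have h2 : Cm (f : V →ₗ[ℂ] V) ((pUc2 z : ↥Kc)) = 0 := by
        have h3 := LinearMap.ext_iff.mp hJ2 (pUc2 z)
        simpa using h3
      simp [h1, h2]
    have hf0 : (f : V →ₗ[ℂ] V) = 0 := by
      ext v
      rw [← hsplitK v, map_add]
      have h1 : (f : V →ₗ[ℂ] V) ((pK v : V)) = 0 := by
        rw [hfK _ hfT (pK v), hB0]
        simp
      have h2 : (f : V →ₗ[ℂ] V) ((pKc v : V)) = 0 := by
        rw [hfKc (f : V →ₗ[ℂ] V) (pKc v), hA0, hCmf]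
        simp
      simp [h1, h2]
    simp only [Submodule.mem_bot]
    exact Subtype.ext (Subtype.ext hf0)
  have hJinj : Function.Injective ⇑J := by
    intro a b hab
    have hmem : a - b ∈ LinearMap.ker J := by
      have hab2 : a - b = a + (-1 : ℂ) • b := by
        apply Subtype.ext; apply Subtype.ext; ext x; simp [sub_eq_add_neg]
      rw [LinearMap.mem_ker, hab2, map_add, map_smul, hab]
      ext <;> simp
    rw [hJker] at hmem
    exact sub_eq_zero.mp ((Submodule.mem_bot ℂ).mp hmem)
  have hker_bound : Module.finrank ℂ (LinearMap.ker PA) ≤ (n - r) * u + (r - u) * (n - r) := by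
    have h1 := LinearMap.finrank_le_finrank_of_injective
      (M := ↥(LinearMap.ker PA)) (M' := (↥K →ₗ[ℂ] ↥U2) × (↥Uc →ₗ[ℂ] ↥Wc)) hJinj
    rwa [Module.finrank_prod, Module.finrank_linearMap, Module.finrank_linearMap,
      hKr, hU2r, hUcr, hWcr] at h1
  -- assemble
  have htotal : Module.finrank ℂ T ≤ r * r + ((n - r) * u + (r - u) * (n - r)) := by omega
  have harith : r * r + ((n - r) * u + (r - u) * (n - r)) ≤ n ^ 2 - n := by
    have h1 : (n - r) * u + (r - u) * (n - r) = (n - r) * r := by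
      rw [Nat.mul_comm (r - u) (n - r), ← Nat.mul_add, Nat.add_sub_cancel' huKc]
    have h2 : r * r + (n - r) * r = n * r := by
      rw [← Nat.add_mul, Nat.add_sub_cancel' (le_of_lt hrn)]
    have h3 : n * r ≤ n * (n - 1) := Nat.mul_le_mul_left n (by omega)
    have h4 : n * (n - 1) + n = n * n := by
      cases n with
      | zero => simp
      | succ m => simp only [Nat.succ_sub_one]; ring
    have h5 : n ^ 2 = n * n := sq n
    omega
  omega

theorem stmt3 (n : ℕ) (S : Submodule ℂ (Matrix (Fin n) (Fin n) ℂ))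
    (hS : ∀ M ∈ S, M.det = 0) :
    Module.finrank ℂ S ≤ n ^ 2 - n := by
  classical
  set e := Matrix.toLin' (R := ℂ) (m := Fin n) (n := Fin n) with he
  set T := S.map (e : Matrix (Fin n) (Fin n) ℂ →ₗ[ℂ] ((Fin n → ℂ) →ₗ[ℂ] (Fin n → ℂ))) with hT
  have hfr : Module.finrank ℂ T = Module.finrank ℂ S := LinearEquiv.finrank_map_eq e S
  have hV : Module.finrank ℂ (Fin n → ℂ) = n := by simp
  have hTsing : ∀ f ∈ T, ¬ Function.Surjective f := by
    rintro f ⟨M, hM, rfl⟩ hsurj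
    have hdet := hS M hM
    obtain ⟨v, hv, hMv⟩ := (Matrix.exists_mulVec_eq_zero_iff.mpr hdet)
    have hinj : Function.Injective ⇑(e M) := by
      exact (LinearMap.injective_iff_surjective (f := e M)).mpr hsurj
    apply hv
    apply hinj
    rw [map_zero]
    rw [he]
    simpa [Matrix.toLin'_apply] using hMv
  have := endo_bound T hTsing
  rw [hfr, hV] at this
  exact this
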